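/- For weakly flat filters F₁, F₂ on the general metric space [0,∞] (distance d(x,y) = max{y−x,0}), one has ⨅_{f∈F₁} ⨆_{x∈f} ⨆_{g∈F₂} ⨅_{y∈g} d(x,y) = d(liminf(F₁), liminf(F₂)), where liminf(F) = ⨆_{f∈F} ⨅_{x∈f} x. -/

import Mathlib

open ENNReal

open Filter

private lemma biInf_sub' (s : Set ℝ≥0∞) (hs : s.Nonempty) (a : ℝ≥0∞) :
    (⨅ y ∈ s, (y - a)) = (⨅ y ∈ s, y) - a := by
  obtain ⟨y₀, hy₀⟩ := hs
  refine le_antisymm ?_ (le_iInf₂ fun y hy => tsub_le_tsub_right (iInf₂_le y hy) a)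
  rcases eq_or_ne a ∞ with rfl | ha
  · calc (⨅ y ∈ s, (y - ⊤)) ≤ y₀ - ⊤ := iInf₂_le y₀ hy₀
      _ = 0 := ENNReal.sub_top
      _ ≤ _ := zero_le
  rcases eq_or_ne (⨅ y ∈ s, y) ∞ with hI | hI
  · have : (⨅ y ∈ s, y) - a = ∞ := by
      rw [hI]; exact ENNReal.sub_eq_top_iff.mpr ⟨rfl, ha⟩
    rw [this]; exact le_top
  apply ENNReal.le_of_forall_pos_le_add
  intro ε hε _
  have hlt : (⨅ y ∈ s, y) < (⨅ y ∈ s, y) + ε :=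
    ENNReal.lt_add_right hI (by exact_mod_cast hε.ne')
  rw [iInf_lt_iff] at hlt
  obtain ⟨y, hy⟩ := hlt
  rw [iInf_lt_iff] at hy
  obtain ⟨hys, hy⟩ := hy
  calc (⨅ y ∈ s, (y - a)) ≤ y - a := iInf₂_le y hys
    _ ≤ ((⨅ y ∈ s, y) + ε) - a := tsub_le_tsub_right hy.le a
    _ ≤ ((⨅ y ∈ s, y) - a) + ε := by
        rw [tsub_le_iff_right]
        calc (⨅ y ∈ s, y) + ε ≤ ((⨅ y ∈ s, y) - a + a) + ε :=
              add_le_add_left (le_tsub_add : (⨅ y ∈ s, y) ≤ (⨅ y ∈ s, y) - a + a) ε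
          _ = ((⨅ y ∈ s, y) - a) + ε + a := by ring

theorem hom_weaklyflat_ennreal (F₁ F₂ : Filter ℝ≥0∞) [F₁.NeBot] [F₂.NeBot]
    (h₁ : ∀ ε : ℝ≥0∞, 0 < ε → ∃ f ∈ F₁, ∀ x ∈ f, ∀ g ∈ F₁, ∃ y ∈ g, y - x ≤ ε)
    (h₂ : ∀ ε : ℝ≥0∞, 0 < ε → ∃ f ∈ F₂, ∀ x ∈ f, ∀ g ∈ F₂, ∃ y ∈ g, y - x ≤ ε) :
    (⨅ f ∈ F₁, ⨆ x ∈ f, ⨆ g ∈ F₂, ⨅ y ∈ g, y - x) =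
      (⨆ g ∈ F₂, ⨅ y ∈ g, y) - (⨆ f ∈ F₁, ⨅ x ∈ f, x) := by
  set L₁ := ⨆ f ∈ F₁, ⨅ x ∈ f, x with hL₁
  set L₂ := ⨆ g ∈ F₂, ⨅ y ∈ g, y with hL₂
  have key : ∀ f ∈ F₁, (⨆ x ∈ f, ⨆ g ∈ F₂, ⨅ y ∈ g, y - x) = L₂ - ⨅ x ∈ f, x := by
    intro f _
    have step1 : ∀ x : ℝ≥0∞, (⨆ g ∈ F₂, ⨅ y ∈ g, y - x) = L₂ - x := by
      intro x
      have : ∀ g ∈ F₂, (⨅ y ∈ g, y - x) = (⨅ y ∈ g, y) - x := fun g hg =>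
        biInf_sub' g (Filter.nonempty_of_mem hg) x
      rw [iSup_congr fun g => iSup_congr fun hg => this g hg, hL₂,
        ENNReal.iSup_sub]
      refine iSup_congr fun g => ?_
      rcases Classical.em (g ∈ F₂) with hg | hg
      · simp [hg]
      · simp [hg, zero_tsub]
    rw [iSup_congr fun x => iSup_congr fun _ : x ∈ f => step1 x]
    rw [ENNReal.sub_iInf]
    refine iSup_congr fun x => ?_
    rcases Classical.em (x ∈ f) with hx | hx
    · simp [hx]
    · simp [hx, ENNReal.sub_top]
  rw [iInf_congr fun f => iInf_congr fun hf => key f hf]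
  refine le_antisymm ?_ (le_iInf₂ fun f hf => tsub_le_tsub_left (le_iSup₂ f hf) L₂)
  apply ENNReal.le_of_forall_pos_le_add
  intro ε hε _
  have hεne : (ε : ℝ≥0∞) ≠ 0 := by exact_mod_cast hε.ne'
  have claim : ∃ f ∈ F₁, L₁ ≤ (⨅ x ∈ f, x) + ε := by
    rcases eq_or_ne L₁ ∞ with hL | hL
    · obtain ⟨f, hf, hflat⟩ := h₁ 1 one_pos
      refine ⟨f, hf, ?_⟩
      have hall : ∀ x ∈ f, x = ∞ := by
        intro x hx
        by_contra hxne
        have hxfin : x + 1 < L₁ := by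
          rw [hL]; exact ENNReal.add_lt_top.mpr ⟨(lt_top_iff_ne_top.mpr hxne), ENNReal.one_lt_top⟩
        rw [hL₁, lt_iSup_iff] at hxfin
        obtain ⟨g, hg⟩ := hxfin
        rw [lt_iSup_iff] at hg
        obtain ⟨hgF, hg⟩ := hg
        obtain ⟨y, hyg, hy⟩ := hflat x hx g hgF
        have : y ≤ x + 1 := by
          rw [tsub_le_iff_right] at hy; rwa [add_comm] at hy
        exact absurd (hg.trans_le ((iInf₂_le y hyg).trans this)) (lt_irrefl _)
      have : (⨅ x ∈ f, x) = ∞ :=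
        le_antisymm le_top (le_iInf₂ fun x hx => (hall x hx) ▸ le_rfl)
      rw [this]
      exact le_top.trans (le_add_right le_rfl)
    · rcases le_or_gt L₁ ε with hle | hlt
      · exact ⟨Set.univ, univ_mem, hle.trans (le_add_left le_rfl)⟩
      · have : L₁ - ε < L₁ :=
          ENNReal.sub_lt_self hL ((pos_iff_ne_zero.mpr hεne).trans hlt).ne' hεne
        rw [hL₁, lt_iSup_iff] at this
        obtain ⟨f, hf⟩ := this
        rw [lt_iSup_iff] at hf
        obtain ⟨hfF, hf⟩ := hf
        exact ⟨f, hfF, tsub_le_iff_right.mp hf.le⟩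
  obtain ⟨f, hf, hfle⟩ := claim
  calc (⨅ f ∈ F₁, (L₂ - ⨅ x ∈ f, x)) ≤ L₂ - ⨅ x ∈ f, x := iInf₂_le f hf
    _ ≤ (L₂ - L₁) + ε := by
        rw [tsub_le_iff_right]
        calc L₂ ≤ (L₂ - L₁) + L₁ := le_tsub_add
          _ ≤ (L₂ - L₁) + ((⨅ x ∈ f, x) + ε) := add_le_add_right hfle _
          _ = (L₂ - L₁) + ε + (⨅ x ∈ f, x) := by ring
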